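/- Bloc principle for the Banzhaf index: let (N, ν) be a simple game and i ≠ j in N. Define the bloc game (N', ν') where N' = (N \ {i,j}) ∪ {b} for a fresh player b, and for C ⊆ N \ {i,j}: ν'(C) = ν(C) and ν'(C ∪ {b}) = ν(C ∪ {i,j}). Then B_b(N', ν') = B_i(N, ν) + B_j(N, ν). -/

import Mathlib

open Finset

/-- The Banzhaf index of player `i` in the simple game `ν` on the finite player set `α`. -/
def banzhaf {α : Type*} [Fintype α] [DecidableEq α] (ν : Finset α → ℤ) (i : α) : ℚ :=
  (∑ C ∈ (Finset.univ.erase i).powerset, ((ν (insert i C) - ν C : ℤ) : ℚ)) /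
    2 ^ (Fintype.card α - 1)

/-- The player set of the bloc game obtained by merging `i` and `j` into a fresh
bloc player (the `Sum.inr` element). -/
def BlocPlayers (α : Type*) (i j : α) : Type _ := {a : α // a ≠ i ∧ a ≠ j} ⊕ Unit

instance {α : Type*} [Fintype α] [DecidableEq α] (i j : α) :
    Fintype (BlocPlayers α i j) := by unfold BlocPlayers; infer_instance

instance {α : Type*} [DecidableEq α] (i j : α) :
    DecidableEq (BlocPlayers α i j) := by unfold BlocPlayers; infer_instance

/-- The coalition of original players corresponding to a coalition in the bloc game:
each surviving player represents herself and the bloc player represents `{i, j}`. -/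
def blocCoalition {α : Type*} [DecidableEq α] (i j : α)
    (C : Finset (BlocPlayers α i j)) : Finset α :=
  C.biUnion fun x => Sum.elim (fun a => {a.1}) (fun _ => ({i, j} : Finset α)) x

open Classical in
noncomputable def blocBack {α : Type*} [Fintype α] [DecidableEq α] (i j : α) (S : Finset α) :
    Finset (BlocPlayers α i j) :=
  Finset.univ.filter fun x => Sum.elim (fun a => a.1 ∈ S) (fun _ => False) x


/-- Bloc principle for the Banzhaf index: merging two distinct players `i` and `j`
into a single bloc player yields a game in which the bloc's Banzhaf index is the
sum of the Banzhaf indices of `i` and `j` in the original game. -/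
theorem banzhaf_bloc {α : Type*} [Fintype α] [DecidableEq α]
    (ν : Finset α → ℤ) (hval : ∀ C, ν C = 0 ∨ ν C = 1) (i j : α) (hij : i ≠ j) :
    banzhaf (fun C : Finset (BlocPlayers α i j) => ν (blocCoalition i j C))
        (Sum.inr ()) =
      banzhaf ν i + banzhaf ν j := by
  classical
  have hn : 1 < Fintype.card α := Fintype.one_lt_card_iff.2 ⟨i, j, hij⟩
  have hcard : Fintype.card (BlocPlayers α i j) = Fintype.card α - 1 := by
    show Fintype.card ({a : α // a ≠ i ∧ a ≠ j} ⊕ Unit) = _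
    rw [Fintype.card_sum, Fintype.card_unit, Fintype.card_subtype]
    have h1 : (univ.filter fun a : α => a ≠ i ∧ a ≠ j) = (univ.erase i).erase j := by
      ext a; simp [mem_erase, and_comm]
    rw [h1, card_erase_of_mem (by simp [hij.symm]), card_erase_of_mem (mem_univ i),
      card_univ]
    omega
  set P := ((univ.erase i).erase j).powerset with hP
  -- membership characterizations
  have hmemBack : ∀ (S : Finset α) (x : BlocPlayers α i j),
      x ∈ blocBack i j S ↔ Sum.elim (fun a => a.1 ∈ S) (fun _ => False) x := by
    intro S x; simp [blocBack]
  have hmemBloc : ∀ (C : Finset (BlocPlayers α i j)) (y : α),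
      y ∈ blocCoalition i j C ↔
        (∃ a : {a : α // a ≠ i ∧ a ≠ j}, Sum.inl a ∈ C ∧ a.1 = y) ∨
        (Sum.inr () ∈ C ∧ (y = i ∨ y = j)) := by
    intro C y
    simp only [blocCoalition, mem_biUnion]
    constructor
    · rintro ⟨x, hx, hy⟩
      rcases x with a | u
      · exact Or.inl ⟨a, hx, ((mem_singleton).1 (by simpa using hy)).symm⟩
      · exact Or.inr ⟨by cases u; exact hx, by simpa using hy⟩
    · rintro (⟨a, ha, rfl⟩ | ⟨h, hy⟩)
      · exact ⟨Sum.inl a, ha, by simp⟩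
      · exact ⟨Sum.inr (), h, by simpa using hy⟩
  -- L1 : blocCoalition lands in P for C not containing the bloc player
  have hL1 : ∀ C ∈ ((univ : Finset (BlocPlayers α i j)).erase (Sum.inr ())).powerset,
      blocCoalition i j C ∈ P := by
    intro C hC
    rw [mem_powerset] at hC ⊢
    intro y hy
    rw [hmemBloc] at hy
    rcases hy with ⟨a, ha, rfl⟩ | ⟨h, hy⟩
    · simp [mem_erase, a.2.1, a.2.2]
    · exact absurd (hC h) (notMem_erase _ _)
  -- L2
  have hL2 : ∀ S ∈ P,
      blocBack i j S ∈ ((univ : Finset (BlocPlayers α i j)).erase (Sum.inr ())).powerset := by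
    intro S _
    rw [mem_powerset]
    intro x hx
    rw [hmemBack] at hx
    rcases x with a | u
    · exact mem_erase.2 ⟨Sum.inl_ne_inr, mem_univ _⟩
    · exact absurd hx (by simp)
  -- L3
  have hL3 : ∀ C ∈ ((univ : Finset (BlocPlayers α i j)).erase (Sum.inr ())).powerset,
      blocBack i j (blocCoalition i j C) = C := by
    intro C hC
    rw [mem_powerset] at hC
    have hnotin : Sum.inr () ∉ C := fun h => notMem_erase _ _ (hC h)
    ext x
    rw [hmemBack]
    rcases x with a | u
    · simp only [Sum.elim_inl, hmemBloc]
      constructor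
      · rintro (⟨b, hb, hba⟩ | ⟨h, _⟩)
        · have : b = a := Subtype.ext hba
          exact this ▸ hb
        · exact absurd h hnotin
      · intro h; exact Or.inl ⟨a, h, rfl⟩
    · cases u; simp only [Sum.elim_inr, false_iff]; exact hnotin
  -- L4
  have hL4 : ∀ S ∈ P, blocCoalition i j (blocBack i j S) = S := by
    intro S hS
    rw [hP, mem_powerset] at hS
    ext y
    rw [hmemBloc]
    constructor
    · rintro (⟨a, ha, rfl⟩ | ⟨h, hy⟩)
      · exact (hmemBack _ _).1 ha
      · exact False.elim ((hmemBack _ _).1 h)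
    · intro hy
      have hy' := hS hy
      simp only [mem_erase] at hy'
      exact Or.inl ⟨⟨y, hy'.2.1, hy'.1⟩, (hmemBack _ _).2 hy, rfl⟩
  -- L5 : value of insert bloc player
  have hL5 : ∀ C : Finset (BlocPlayers α i j),
      blocCoalition i j (insert (Sum.inr ()) C) = insert i (insert j (blocCoalition i j C)) := by
    intro C
    rw [blocCoalition]; erw [biUnion_insert]
    ext y
    simp only [Sum.elim_inr, mem_union, mem_insert, mem_singleton, blocCoalition]
    tauto
  -- key rewriting of the LHS numerator
  have key : ∑ C ∈ ((univ : Finset (BlocPlayers α i j)).erase (Sum.inr ())).powerset,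
        ((ν (blocCoalition i j (insert (Sum.inr ()) C)) - ν (blocCoalition i j C) : ℤ) : ℚ)
      = ∑ S ∈ P, ((ν (insert i (insert j S)) - ν S : ℤ) : ℚ) := by
    refine Finset.sum_nbij' (fun C => blocCoalition i j C) (fun S => blocBack i j S)
      hL1 hL2 hL3 hL4 ?_
    intro C hC
    rw [hL5]
  -- split the RHS powersets
  have herase : ((univ.erase j).erase i : Finset α) = (univ.erase i).erase j := by
    ext a; simp only [mem_erase, mem_univ, and_true]; tauto
  have hins_i : (univ.erase i : Finset α) = insert j ((univ.erase i).erase j) :=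
    (insert_erase (mem_erase.2 ⟨hij.symm, mem_univ j⟩)).symm
  have hins_j : (univ.erase j : Finset α) = insert i ((univ.erase i).erase j) := by
    rw [← herase]; exact (insert_erase (mem_erase.2 ⟨hij, mem_univ i⟩)).symm
  have hnotin_j : j ∉ ((univ.erase i).erase j : Finset α) := notMem_erase _ _
  have hnotin_i : i ∉ ((univ.erase i).erase j : Finset α) := by
    rw [← herase]; exact notMem_erase _ _
  have hsum : (∑ S ∈ P, ((ν (insert i S) - ν S : ℤ) : ℚ))
      + (∑ S ∈ P, ((ν (insert i (insert j S)) - ν (insert j S) : ℤ) : ℚ))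
      + ((∑ S ∈ P, ((ν (insert j S) - ν S : ℤ) : ℚ))
      + (∑ S ∈ P, ((ν (insert j (insert i S)) - ν (insert i S) : ℤ) : ℚ)))
      = 2 * ∑ S ∈ P, ((ν (insert i (insert j S)) - ν S : ℤ) : ℚ) := by
    rw [Finset.mul_sum, ← sum_add_distrib, ← sum_add_distrib, ← sum_add_distrib]
    refine sum_congr rfl fun S _ => ?_
    rw [Finset.insert_comm j i]
    push_cast; ring
  have h2 : (2 : ℚ) ^ (Fintype.card α - 1) = 2 * 2 ^ (Fintype.card α - 1 - 1) := by
    rw [← pow_succ']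
    congr 1
    omega
  simp only [banzhaf]
  erw [key]; rw [hcard]
  rw [hins_i, hins_j, sum_powerset_insert hnotin_j, sum_powerset_insert hnotin_i]
  rw [← add_div, hsum, h2]
  have he : (2 : ℚ) ^ (Fintype.card α - 1 - 1) ≠ 0 := by positivity
  field_simp
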